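/- Let k be odd, m = 2k, q = 2^m, d = (2^{lk}+1)/(2^l+1) for odd l coprime to k with 0 < l < k, and define S(a) = ∑_{x ∈ GF(q)} (-1)^{Tr_m(x^d + ax)}. Then ∑_{a ∈ GF(q)*} S(a) = (2^k+1)·2^{k+1}/3. -/

import Mathlib

open Finset

private lemma zmod2_cases (c : ZMod 2) : c = 0 ∨ c = 1 := by revert c; decide

private lemma sign_sum_zero {F : Type} [Field F] [Fintype F] [DecidableEq F]
    (hadd2 : ∀ a : F, a + a = 0)
    (s : Finset F) (ψ : F → ZMod 2)
    (hadd : ∀ a b : F, ψ (a + b) = ψ a + ψ b)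
    (x₀ : F) (hx₀ : ψ x₀ = 1)
    (hcl : ∀ a ∈ s, a + x₀ ∈ s) :
    ∑ x ∈ s, (if ψ x = 0 then (1 : ℤ) else -1) = 0 := by
  have key : ∑ x ∈ s, (-(if ψ x = 0 then (1:ℤ) else -1))
      = ∑ x ∈ s, (if ψ x = 0 then (1:ℤ) else -1) := by
    refine Finset.sum_bij' (fun a _ => a + x₀) (fun a _ => a + x₀) (fun a ha => hcl a ha)
      (fun a ha => hcl a ha)
      (fun a _ => by show a + x₀ + x₀ = a; rw [add_assoc, hadd2, add_zero])
      (fun a _ => by show a + x₀ + x₀ = a; rw [add_assoc, hadd2, add_zero]) ?_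
    intro a _
    show -(if ψ a = 0 then (1:ℤ) else -1) = if ψ (a + x₀) = 0 then (1:ℤ) else -1
    rw [hadd, hx₀]
    rcases zmod2_cases (ψ a) with h | h <;> rw [h] <;> decide
  rw [Finset.sum_neg_distrib] at key
  linarith

private lemma nt_cast3 (a b e : ℕ) (ha : Odd a) (hb : Odd b)
    (he : e * (2^a+1) = 2^(a*b)+1) : (e : ZMod 3) = b := by
  have hgeom : (∑ i ∈ range b, (-(2:ℤ)^a)^i) * ((2:ℤ)^a + 1) = 2^(a*b) + 1 := by
    have h1 := geom_sum_mul (-(2:ℤ)^a) b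
    have h2 : (-(2:ℤ)^a)^b - 1 = -(((∑ i ∈ range b, (-(2:ℤ)^a)^i)) * ((2:ℤ)^a + 1)) := by
      rw [← h1]; ring
    have h3 : (-(2:ℤ)^a)^b = -((2:ℤ)^(a*b)) := by rw [hb.neg_pow, ← pow_mul]
    rw [h3] at h2
    linarith
  have hcast : (e : ℤ) = ∑ i ∈ range b, (-(2:ℤ)^a)^i := by
    have he' : (e : ℤ) * ((2:ℤ)^a + 1) = 2^(a*b) + 1 := by exact_mod_cast he
    have hne : ((2:ℤ)^a + 1) ≠ 0 := by positivity
    exact mul_right_cancel₀ hne (by rw [he', hgeom])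
  have h2a : ((2 : ZMod 3))^a = 2 := by
    obtain ⟨t, ht⟩ := ha
    subst ht
    rw [pow_add, pow_mul, show ((2:ZMod 3)^2 = 1) by decide, one_pow, pow_one, one_mul]
  calc (e : ZMod 3) = ((e : ℤ) : ZMod 3) := by push_cast; ring
    _ = ((∑ i ∈ range b, (-(2:ℤ)^a)^i : ℤ) : ZMod 3) := by rw [hcast]
    _ = ∑ i ∈ range b, (-(2:ZMod 3)^a)^i := by push_cast; ring
    _ = ∑ i ∈ range b, 1 := by
        refine Finset.sum_congr rfl fun i _ => ?_
        rw [h2a, show (-2 : ZMod 3) = 1 by decide, one_pow]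
    _ = b := by simp



private lemma nt_main (k l d : ℕ) (hk : Odd k) (hl : Odd l) (hl0 : 0 < l) (hlk : l < k)
    (hco : Nat.Coprime k l) (hd : d = (2 ^ (l * k) + 1) / (2 ^ l + 1)) :
    3 * Nat.gcd d (2^(2*k) - 1) = 2^k + 1 := by
  set n := 2^(2*k) - 1 with hn
  have hk1 : 1 ≤ k := by omega
  have h2k1 : (1:ℕ) ≤ 2^k := Nat.one_le_two_pow
  have h2lk1 : (2:ℕ)^k ≤ 2^(l*k) := Nat.pow_le_pow_right (by norm_num) (Nat.le_mul_of_pos_left k hl0)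
  -- d * (2^l+1) = 2^(l*k)+1
  have hA : (2^l + 1) ∣ 2^(l*k) + 1 := by
    have := hk.nat_add_dvd_pow_add_pow (2^l) 1
    rwa [← pow_mul, one_pow] at this
  have hde : d * (2^l+1) = 2^(l*k)+1 := by rw [hd]; exact Nat.div_mul_cancel hA
  have hB : (2^k+1) ∣ 2^(l*k) + 1 := by
    have := hl.nat_add_dvd_pow_add_pow (2^k) 1
    rwa [← pow_mul, one_pow, mul_comm k l] at this
  set D2 := (2^(l*k)+1) / (2^k+1) with hD2def
  have hD2 : D2 * (2^k+1) = 2^(l*k)+1 := Nat.div_mul_cancel hB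
  have hd3 : (d : ZMod 3) = k := nt_cast3 l k d hl hk hde
  have hD23 : (D2 : ZMod 3) = l := nt_cast3 k l D2 hk hl (by rw [mul_comm k l]; exact hD2)
  have h3k1 : (3:ℕ) ∣ 2^k + 1 := by
    have := hk.nat_add_dvd_pow_add_pow 2 1
    rwa [one_pow] at this
  have hnfact : n = (2^k - 1) * (2^k + 1) := by
    have h2 : 2^(2*k) = 2^k * 2^k := by rw [two_mul, pow_add]
    have hmul1 : 1 ≤ 2^k * 2^k := Nat.one_le_iff_ne_zero.2 (by positivity)
    have h3 : (2^k - 1) * (2^k + 1) = 2^k * 2^k - 1 := by zify [h2k1, hmul1]; ring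
    rw [hn, h2, h3]
  have hbn : (2^k+1) ∣ n := Dvd.intro_left _ hnfact.symm
  have hn0 : 0 < n := by
    have : (4:ℕ) ≤ 2^(2*k) := by
      calc (4:ℕ) = 2^2 := rfl
      _ ≤ 2^(2*k) := Nat.pow_le_pow_right (by norm_num) (by omega)
    omega
  have hd0 : 0 < d := by
    rcases Nat.eq_zero_or_pos d with h | h
    · rw [h] at hde; simp at hde
    · exact h
  -- n ∣ (2^(l*k)+1) - (2^k+1)
  have hcong : n ∣ (2^(l*k) + 1) - (2^k + 1) := by
    obtain ⟨s, hs⟩ := hl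
    have hlke : l * k = 2*k*s + k := by subst hs; ring
    have h1 : (2^(l*k) + 1) - (2^k + 1) = 2^k * (2^(2*k*s) - 1) := by
      have h2 : 2^(l*k) = 2^k * 2^(2*k*s) := by rw [hlke, pow_add, mul_comm]
      have h3 : (1:ℕ) ≤ 2^(2*k*s) := Nat.one_le_two_pow
      rw [h2, Nat.mul_sub_one] at *
      zify [h3, h2lk1]
      rw [h2]
      push_cast [h3]
      ring
    rw [h1]
    have h4 : n ∣ 2^(2*k*s) - 1 := by
      have := Nat.sub_dvd_pow_sub_pow (2^(2*k)) 1 s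
      rwa [one_pow, ← pow_mul] at this
    exact Dvd.dvd.mul_left h4 _
  have hble : 2^k + 1 ≤ 2^(l*k) + 1 := by omega
  -- gcd d n ∣ 2^k+1
  have hGdvd : Nat.gcd d n ∣ 2^k + 1 := by
    have h1 : Nat.gcd d n ∣ 2^(l*k) + 1 := (Nat.gcd_dvd_left d n).trans (hde ▸ Dvd.intro _ rfl)
    have h2 : Nat.gcd d n ∣ (2^(l*k) + 1) - (2^k + 1) := (Nat.gcd_dvd_right d n).trans hcong
    have := Nat.dvd_sub h1 h2
    rwa [Nat.sub_sub_self hble] at this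
  -- 2^k+1 ∣ 3 * gcd d n
  have hgl3 : Nat.gcd n (2^l + 1) ∣ 3 := by
    set g := Nat.gcd n (2^l + 1) with hg
    have hg1 : g ∣ n := Nat.gcd_dvd_left _ _
    have hg2 : g ∣ 2^l + 1 := Nat.gcd_dvd_right _ _
    have e1 : ((2:ZMod g))^l = -1 := by
      have : ((2^l + 1 : ℕ) : ZMod g) = 0 := (ZMod.natCast_eq_zero_iff _ _).2 hg2
      push_cast at this
      linear_combination this
    have e2 : ((2:ZMod g))^(2*k) = 1 := by
      have hmod : 2^(2*k) ≡ 1 [MOD g] := ((Nat.modEq_iff_dvd' Nat.one_le_two_pow).2 hg1).symm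
      have := (ZMod.natCast_eq_natCast_iff _ _ _).2 hmod
      push_cast at this
      exact this
    have e3 : ((2:ZMod g))^(2*l) = 1 := by
      rw [mul_comm 2 l, pow_mul, e1]
      ring
    have e4 : ((2:ZMod g))^(Nat.gcd (2*l) (2*k)) = 1 := pow_gcd_eq_one.2 ⟨e3, e2⟩
    have hgcd2 : Nat.gcd (2*l) (2*k) = 2 := by
      rw [Nat.gcd_mul_left, Nat.gcd_comm l k, hco]
    rw [hgcd2] at e4
    have e5 : ((4:ℕ) : ZMod g) = ((1:ℕ) : ZMod g) := by push_cast; linear_combination e4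
    have := (ZMod.natCast_eq_natCast_iff _ _ _).1 e5
    have := (Nat.modEq_iff_dvd' (by norm_num)).1 this.symm
    simpa using this
  have hb3G : (2^k + 1) ∣ 3 * Nat.gcd d n := by
    have h1 : (2^k+1) ∣ Nat.gcd n (2^(l*k)+1) := Nat.dvd_gcd hbn hB
    have h2 : Nat.gcd n (d * (2^l+1)) ∣ Nat.gcd n d * Nat.gcd n (2^l+1) :=
      gcd_mul_dvd_mul_gcd n d (2^l+1)
    rw [hde] at h2
    have h4 : Nat.gcd n d * Nat.gcd n (2^l+1) ∣ Nat.gcd n d * 3 := mul_dvd_mul_left _ hgl3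
    have h5 : Nat.gcd n d * 3 = 3 * Nat.gcd d n := by rw [mul_comm, Nat.gcd_comm]
    exact h5 ▸ ((h1.trans h2).trans h4)
  -- ¬ (2^k+1 ∣ d)
  have hnotb : ¬ (2^k + 1) ∣ d := by
    intro hcon
    by_cases h3k : 3 ∣ k
    · have h3l : ¬ 3 ∣ l := by
        intro h3l
        have := Nat.dvd_gcd h3k h3l
        rw [hco] at this
        omega
      obtain ⟨t, ht⟩ := hcon
      have hD2t : D2 = t * (2^l + 1) := by
        have h5 : D2 * (2^k+1) = (t * (2^l+1)) * (2^k+1) := by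
          rw [hD2, ← hde, ht]; ring
        exact Nat.eq_of_mul_eq_mul_right (by positivity) h5
      have h3l1 : (3:ℕ) ∣ 2^l + 1 := by
        have := hl.nat_add_dvd_pow_add_pow 2 1
        rwa [one_pow] at this
      have h3D2 : (3:ℕ) ∣ D2 := by
        rw [hD2t]
        exact Dvd.dvd.mul_left h3l1 t
      have : (D2 : ZMod 3) = 0 := (ZMod.natCast_eq_zero_iff _ _).2 h3D2
      rw [hD23] at this
      exact h3l ((ZMod.natCast_eq_zero_iff _ _).1 this)
    · have h3d : (3:ℕ) ∣ d := dvd_trans h3k1 hcon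
      have : (d : ZMod 3) = 0 := (ZMod.natCast_eq_zero_iff _ _).2 h3d
      rw [hd3] at this
      have : (3:ℕ) ∣ k := (ZMod.natCast_eq_zero_iff _ _).1 this
      exact h3k this
  -- conclude
  obtain ⟨s, hsval⟩ := hGdvd
  have hG0 : 0 < Nat.gcd d n := Nat.gcd_pos_of_pos_left _ hd0
  have hs3 : s ∣ 3 := by
    have : Nat.gcd d n * s ∣ 3 * Nat.gcd d n := hsval ▸ hb3G
    rwa [mul_comm 3 (Nat.gcd d n), Nat.mul_dvd_mul_iff_left hG0] at this
  rcases (Nat.prime_three.eq_one_or_self_of_dvd s hs3) with h1 | h3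
  · exfalso
    rw [h1, mul_one] at hsval
    exact hnotb (hsval ▸ Nat.gcd_dvd_left d n)
  · rw [h3] at hsval
    omega


section Tr
variable {F : Type} [Field F] [Fintype F] [DecidableEq F] [Algebra (ZMod 2) F]

private lemma charF2 : CharP F 2 :=
  charP_of_injective_algebraMap (algebraMap (ZMod 2) F).injective 2

private lemma trace_frob_sum (k : ℕ) (hk1 : 1 ≤ k) (hF : Fintype.card F = 2^(2*k)) (x : F) :
    algebraMap (ZMod 2) F (Algebra.trace (ZMod 2) F x) = ∑ i ∈ range (2*k), x^(2^i) := by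
  haveI : CharP F 2 := charF2
  haveI : ExpChar F 2 := inferInstance
  rw [trace_eq_sum_automorphisms]
  -- enumerate automorphisms by frobenius powers
  have hrank : Module.finrank (ZMod 2) F = 2*k := by
    have hc := Module.card_eq_pow_finrank (K := ZMod 2) (V := F)
    rw [ZMod.card, hF] at hc
    exact (Nat.pow_right_injective (le_refl 2) hc).symm
  have hcardaut : Fintype.card (F ≃ₐ[ZMod 2] F) = 2*k := by
    rw [← Nat.card_eq_fintype_card, IsGalois.card_aut_eq_finrank, hrank]
  set φ : ℕ → (F ≃ₐ[ZMod 2] F) := fun i =>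
    AlgEquiv.ofRingEquiv (f := iterateFrobeniusEquiv F 2 i)
      (fun c => by
        rw [iterateFrobeniusEquiv_def, ← map_pow]
        congr 1
        rcases zmod2_cases c with h | h
        · rw [h, zero_pow (by positivity)]
        · rw [h, one_pow]) with hφ
  have hφapp : ∀ (i : ℕ) (y : F), φ i y = y ^ (2^i) := fun i y => rfl
  have hinj : Set.InjOn φ (range (2*k)) := by
    intro i hi j hj hij
    simp only [Finset.coe_range, Set.mem_Iio] at hi hj
    obtain ⟨g, hg⟩ := IsCyclic.exists_generator (α := Fˣ)
    have hord : orderOf g = Fintype.card Fˣ := by rw [orderOf_eq_card_of_forall_mem_zpowers hg, Nat.card_eq_fintype_card]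
    have hcardu : Fintype.card Fˣ = 2^(2*k) - 1 := by rw [Fintype.card_units, hF]
    have hgl : ((g:F))^(2^i) = ((g:F))^(2^j) := by
      have := congrArg (fun (σ : F ≃ₐ[ZMod 2] F) => σ (g:F)) hij
      simpa [hφapp] using this
    have hgu : g^(2^i) = g^(2^j) := Units.ext (by push_cast [Units.val_pow_eq_pow_val]; exact hgl)
    have hmod : 2^i ≡ 2^j [MOD orderOf g] := pow_eq_pow_iff_modEq.1 hgu
    rw [hord, hcardu] at hmod
    have hlt : ∀ m, m < 2*k → 2^m < 2^(2*k) - 1 := by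
      intro m hm
      have h1 : 2^m ≤ 2^(2*k-1) := Nat.pow_le_pow_right (by norm_num) (by omega)
      have h2 : 2^(2*k-1) * 2 = 2^(2*k) := by
        rw [← pow_succ]
        congr 1
        omega
      have h3 : 2 ≤ 2^(2*k-1) := by
        calc (2:ℕ) = 2^1 := rfl
        _ ≤ 2^(2*k-1) := Nat.pow_le_pow_right (by norm_num) (by omega)
      omega
    have := hmod.eq_of_lt_of_lt (hlt i hi) (hlt j hj)
    exact Nat.pow_right_injective (le_refl 2) this
  have himg : (range (2*k)).image φ = (univ : Finset (F ≃ₐ[ZMod 2] F)) := by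
    apply Finset.eq_of_subset_of_card_le (subset_univ _)
    rw [card_univ, hcardaut, Finset.card_image_of_injOn hinj, card_range]
  rw [← himg, Finset.sum_image (fun i hi j hj h => hinj hi hj h)]
  exact Finset.sum_congr rfl fun i _ => hφapp i x

end Tr

section Tr2
variable {F : Type} [Field F] [Fintype F] [DecidableEq F] [Algebra (ZMod 2) F]

private lemma trace_zero_of_fixed (k : ℕ) (hk1 : 1 ≤ k) (hF : Fintype.card F = 2^(2*k))
    (x : F) (hx : x^(2^k) = x) : Algebra.trace (ZMod 2) F x = 0 := by
  haveI : CharP F 2 := charF2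
  apply (algebraMap (ZMod 2) F).injective
  rw [map_zero, trace_frob_sum k hk1 hF x]
  have hsplit : ∑ i ∈ range (2*k), x^(2^i)
      = ∑ i ∈ range k, x^(2^i) + ∑ i ∈ range k, x^(2^(k+i)) := by
    rw [two_mul]
    exact Finset.sum_range_add (fun i => x^(2^i)) k k
  have hrep : ∀ i : ℕ, x^(2^(k+i)) = x^(2^i) := by
    intro i
    rw [pow_add, pow_mul, hx]
  rw [hsplit, Finset.sum_congr rfl (fun i _ => hrep i)]
  exact CharTwo.add_self_eq_zero _

private lemma exists_trace_one (k : ℕ) (hk1 : 1 ≤ k) (hF : Fintype.card F = 2^(2*k)) :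
    ∃ x : F, Algebra.trace (ZMod 2) F x = 1 := by
  by_contra hno
  push_neg at hno
  have hzero : ∀ x : F, Algebra.trace (ZMod 2) F x = 0 := by
    intro x
    rcases zmod2_cases (Algebra.trace (ZMod 2) F x) with h | h
    · exact h
    · exact absurd h (hno x)
  have hevalzero : ∀ x : F, ∑ i ∈ range (2*k), x^(2^i) = 0 := by
    intro x
    rw [← trace_frob_sum k hk1 hF x, hzero, map_zero]
  set p : Polynomial F := ∑ i ∈ range (2*k), Polynomial.X ^ (2^i) with hp
  have hpne : p ≠ 0 := by
    intro h
    have hc : p.coeff 1 = 1 := by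
      rw [hp, Polynomial.finset_sum_coeff]
      have : ∀ i ∈ range (2*k), (Polynomial.X ^ (2^i) : Polynomial F).coeff 1
          = if i = 0 then 1 else 0 := by
        intro i _
        rw [Polynomial.coeff_X_pow]
        by_cases h0 : i = 0
        · subst h0; norm_num
        · rw [if_neg, if_neg h0]
          intro h1
          have h2 : (2:ℕ)^1 ≤ 2^i := Nat.pow_le_pow_right (by norm_num) (by omega)
          omega
      rw [Finset.sum_congr rfl this, Finset.sum_ite_eq' (range (2*k)) 0 (fun _ => (1:F))]
      rw [if_pos (Finset.mem_range.2 (by omega))]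
    rw [h] at hc
    simp at hc
  have hdeg : p.natDegree < Fintype.card F := by
    have h1 : p.natDegree ≤ 2^(2*k-1) := by
      apply Polynomial.natDegree_sum_le_of_forall_le
      intro i hi
      rw [Polynomial.natDegree_X_pow]
      exact Nat.pow_le_pow_right (by norm_num) (by simp at hi; omega)
    have h2 : (2:ℕ)^(2*k-1) < 2^(2*k) := Nat.pow_lt_pow_right (by norm_num) (by omega)
    rw [hF]
    omega
  have hsub : (univ : Finset F) ⊆ p.roots.toFinset := by
    intro x _
    rw [Multiset.mem_toFinset, Polynomial.mem_roots hpne]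
    rw [Polynomial.IsRoot, hp, Polynomial.eval_finset_sum]
    simpa using hevalzero x
  have := (Finset.card_le_card hsub).trans
    ((Multiset.toFinset_card_le _).trans (Polynomial.card_roots' p))
  rw [Finset.card_univ] at this
  omega


end Tr2


section Units
variable {F : Type} [Field F] [Fintype F] [DecidableEq F]

private lemma Rcard_le (t : ℕ) (ht : 0 < t) :
    #(univ.filter fun y : Fˣ => y^t = 1) ≤ t := by
  have h := card_nthRoots_subgroup_units (Units.coeHom F) (fun _ _ h => Units.ext h) ht 1
  have h2 := Polynomial.card_nthRoots t ((Units.coeHom F) 1)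
  exact le_trans (le_of_eq (by congr 1)) (h.trans h2)

private lemma fiber_card_eq (t : ℕ) (b x₀ : Fˣ) (h : x₀ ^ t = b) :
    #(univ.filter fun x : Fˣ => x^t = b) = #(univ.filter fun x : Fˣ => x^t = 1) := by
  apply Finset.card_bij' (fun x _ => x₀⁻¹ * x) (fun y _ => x₀ * y)
  · intro a ha
    rw [Finset.mem_filter] at ha ⊢
    refine ⟨mem_univ _, ?_⟩
    rw [mul_pow, inv_pow, h, ha.2, inv_mul_cancel]
  · intro a ha
    rw [Finset.mem_filter] at ha ⊢
    refine ⟨mem_univ _, ?_⟩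
    rw [mul_pow, h, ha.2, mul_one]
  · intro a _; rw [← mul_assoc, mul_inv_cancel, one_mul]
  · intro a _; rw [← mul_assoc, inv_mul_cancel, one_mul]

private lemma Rcard_eq (t : ℕ) (htn : t ∣ Fintype.card Fˣ) :
    #(univ.filter fun y : Fˣ => y^t = 1) = t := by
  set n := Fintype.card Fˣ with hn
  have hn0 : 0 < n := Fintype.card_pos
  have ht0 : 0 < t := Nat.pos_of_dvd_of_pos htn hn0
  obtain ⟨s, hs⟩ := htn
  have hs0 : 0 < s := by
    rcases Nat.eq_zero_or_pos s with h | h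
    · rw [h, mul_zero] at hs; omega
    · exact h
  have hcount : #(univ : Finset Fˣ)
      = ∑ b ∈ univ.image (fun x : Fˣ => x^t), #(univ.filter fun x : Fˣ => x^t = b) :=
    Finset.card_eq_sum_card_image (fun x : Fˣ => x^t) univ
  have hfib : ∀ b ∈ univ.image (fun x : Fˣ => x^t),
      #(univ.filter fun x : Fˣ => x^t = b) = #(univ.filter fun y : Fˣ => y^t = 1) := by
    intro b hb
    obtain ⟨x₀, _, hx₀⟩ := Finset.mem_image.1 hb
    exact fiber_card_eq t b x₀ hx₀
  rw [Finset.sum_congr rfl hfib, Finset.sum_const, smul_eq_mul] at hcount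
  have himle : #(univ.image (fun x : Fˣ => x^t)) ≤ s := by
    have hsub : univ.image (fun x : Fˣ => x^t) ⊆ univ.filter (fun y : Fˣ => y^s = 1) := by
      intro b hb
      obtain ⟨x₀, _, hx₀⟩ := Finset.mem_image.1 hb
      rw [Finset.mem_filter]
      refine ⟨mem_univ _, ?_⟩
      rw [← hx₀, ← pow_mul, ← hs, hn, pow_card_eq_one]
    exact (Finset.card_le_card hsub).trans (Rcard_le s hs0)
  have hRle := Rcard_le (F := F) t ht0
  rw [card_univ, ← hn] at hcount
  have h1 : n ≤ s * #(univ.filter fun y : Fˣ => y^t = 1) := by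
    rw [hcount]
    exact Nat.mul_le_mul_right _ himle
  have h2 : s * t ≤ s * #(univ.filter fun y : Fˣ => y^t = 1) := by
    calc s * t = t * s := mul_comm s t
    _ = n := hs.symm
    _ ≤ _ := h1
  have h3 : t ≤ #(univ.filter fun y : Fˣ => y^t = 1) := Nat.le_of_mul_le_mul_left h2 hs0
  omega

private lemma pow_sum_eq (d : ℕ) (hd : 0 < d) (FF : Fˣ → ℤ)
    (G s : ℕ) (hG : G = Nat.gcd d (Fintype.card Fˣ)) (hs : s = Fintype.card Fˣ / G) :
    ∑ x : Fˣ, FF (x^d) = (G : ℤ) * ∑ b ∈ univ.filter (fun y : Fˣ => y ^ s = 1), FF b := by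
  set n := Fintype.card Fˣ with hn
  have hn0 : 0 < n := Fintype.card_pos
  have hGd : G ∣ d := hG ▸ Nat.gcd_dvd_left d n
  have hGn : G ∣ n := hG ▸ Nat.gcd_dvd_right d n
  have hG0 : 0 < G := hG ▸ Nat.gcd_pos_of_pos_left _ hd
  have hGs : G * s = n := by rw [hs]; exact Nat.mul_div_cancel' hGn
  have hsn : s ∣ n := Dvd.intro_left G hGs
  have hds : d * s = (d / G) * n := by
    obtain ⟨c, hc⟩ := hGd
    rw [hc, ← hGs, Nat.mul_div_cancel_left _ hG0]
    ring
  have hmaps : ∀ x : Fˣ, x ∈ (univ : Finset Fˣ) → x^d ∈ univ.filter (fun y : Fˣ => y ^ s = 1) := by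
    intro x _
    rw [Finset.mem_filter]
    refine ⟨mem_univ _, ?_⟩
    rw [← pow_mul, hds, mul_comm, pow_mul, hn, pow_card_eq_one, one_pow]
  have hkey := Finset.sum_fiberwise_of_maps_to' hmaps FF
  rw [← hkey]
  -- now show each fiber has size G
  have hRd : (univ.filter fun x : Fˣ => x^d = 1) = (univ.filter fun x : Fˣ => x^G = 1) := by
    ext x
    simp only [Finset.mem_filter, mem_univ, true_and]
    constructor
    · intro h
      have := pow_gcd_eq_one.2 ⟨h, hn ▸ pow_card_eq_one⟩
      rwa [← hG] at this
    · intro h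
      rw [← Nat.div_mul_cancel hGd, mul_comm, pow_mul, h, one_pow]
  have hRdcard : #(univ.filter fun x : Fˣ => x^d = 1) = G := by
    rw [hRd]; exact Rcard_eq G hGn
  have hfible : ∀ b : Fˣ, #(univ.filter fun x : Fˣ => x^d = b) ≤ G := by
    intro b
    by_cases hne : (univ.filter fun x : Fˣ => x^d = b).Nonempty
    · obtain ⟨x₀, hx₀⟩ := hne
      rw [Finset.mem_filter] at hx₀
      rw [fiber_card_eq d b x₀ hx₀.2, hRdcard]
    · rw [Finset.not_nonempty_iff_eq_empty.1 hne]
      simp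
  have hRscard : #(univ.filter fun y : Fˣ => y^s = 1) = s := Rcard_eq s hsn
  have hsumfib : ∑ b ∈ univ.filter (fun y : Fˣ => y ^ s = 1),
      #(univ.filter fun x : Fˣ => x^d = b) = n := by
    have := Finset.sum_card_fiberwise_eq_card_filter (univ : Finset Fˣ)
      (univ.filter (fun y : Fˣ => y ^ s = 1)) (fun x : Fˣ => x^d)
    rw [this, Finset.filter_true_of_mem (fun x hx => hmaps x hx), card_univ]
  have hfibeq : ∀ b ∈ univ.filter (fun y : Fˣ => y ^ s = 1),
      #(univ.filter fun x : Fˣ => x^d = b) = G := by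
    by_contra hcon
    push_neg at hcon
    obtain ⟨b₀, hb₀, hb₀ne⟩ := hcon
    have hlt : #(univ.filter fun x : Fˣ => x^d = b₀) < G :=
      lt_of_le_of_ne (hfible b₀) hb₀ne
    have := Finset.sum_lt_sum (f := fun b => #(univ.filter fun x : Fˣ => x^d = b))
      (g := fun _ => G) (fun b _ => hfible b) ⟨b₀, hb₀, hlt⟩
    rw [hsumfib, Finset.sum_const, smul_eq_mul, hRscard, mul_comm s G, hGs] at this
    omega
  calc ∑ b ∈ univ.filter (fun y : Fˣ => y ^ s = 1), ∑ _x ∈ univ.filter (fun x : Fˣ => x^d = b), FF b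
      = ∑ b ∈ univ.filter (fun y : Fˣ => y ^ s = 1), (G:ℤ) * FF b := by
        refine Finset.sum_congr rfl fun b hb => ?_
        rw [Finset.sum_const, hfibeq b hb, nsmul_eq_mul]
    _ = (G : ℤ) * ∑ b ∈ univ.filter (fun y : Fˣ => y ^ s = 1), FF b := by
        rw [Finset.mul_sum]

end Units

section Main1
variable {F : Type} [Field F] [Fintype F] [DecidableEq F] [Algebra (ZMod 2) F]

private lemma coset_sum (k : ℕ) (hk1 : 1 ≤ k) (hF : Fintype.card F = 2^(2*k))
    (hm3 : (2^k - 1) % 3 = 1)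
    (w : Fˣ) (hw3 : w^3 = 1) (hw1 : w ≠ 1) :
    ∑ z ∈ univ.filter (fun z : Fˣ => z^(2^k - 1) = 1),
      (if Algebra.trace (ZMod 2) F ((w:F) * (z:F)) = 0 then (1:ℤ) else -1) = -1 := by
  haveI : CharP F 2 := charF2
  haveI : ExpChar F 2 := inferInstance
  set m' := 2^k - 1 with hm'
  have h2k1 : (1:ℕ) ≤ 2^k := Nat.one_le_two_pow
  have hm'1 : m' + 1 = 2^k := by omega
  set f : F → ℤ := fun u => if Algebra.trace (ZMod 2) F u = 0 then (1:ℤ) else -1 with hf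
  -- w^m' = w
  have hwm : w^m' = w := by
    obtain ⟨q, hq⟩ : ∃ q, m' = 3*q + 1 := ⟨m'/3, by omega⟩
    rw [hq, pow_add, pow_mul, hw3, one_pow, one_mul, pow_one]
  have hwK : ((w:F))^(2^k) ≠ (w:F) := by
    intro h
    have hu : w^(2^k) = w := Units.ext (by rw [Units.val_pow_eq_pow_val]; exact h)
    rw [← hm'1, pow_succ, hwm] at hu
    exact hw1 (mul_right_cancel (hu.trans (one_mul w).symm))
  set Kf := univ.filter (fun x : F => x^(2^k) = x) with hKf
  have hK0 : (0:F) ∈ Kf := by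
    rw [hKf, Finset.mem_filter]
    exact ⟨mem_univ _, zero_pow (by positivity)⟩
  have hKmem : ∀ x : F, x ∈ Kf ↔ x^(2^k) = x := by
    intro x; rw [hKf, Finset.mem_filter]; simp
  have hKadd : ∀ a b : F, a ∈ Kf → b ∈ Kf → a + b ∈ Kf := by
    intro a b ha hb
    rw [hKmem] at ha hb ⊢
    rw [add_pow_char_pow, ha, hb]
  -- bijection between Rm and Kf.erase 0
  have hzmem : ∀ z : Fˣ, z^m' = 1 → ((z:F))^(2^k) = (z:F) := by
    intro z hz
    rw [← hm'1, pow_succ, ← Units.val_pow_eq_pow_val, hz]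
    simp
  have hxmem : ∀ x : F, x ∈ Kf.erase 0 → ∃ hx0 : x ≠ 0, (Units.mk0 x hx0)^m' = 1 := by
    intro x hx
    have hx0 : x ≠ 0 := (Finset.mem_erase.1 hx).1
    have hxK : x^(2^k) = x := (hKmem x).1 (Finset.mem_erase.1 hx).2
    refine ⟨hx0, Units.ext ?_⟩
    rw [Units.val_pow_eq_pow_val, Units.val_mk0, Units.val_one]
    have : x^m' * x = x := by rw [← pow_succ, hm'1, hxK]
    calc x^m' = x^m' * x * x⁻¹ := by field_simp
    _ = x * x⁻¹ := by rw [this]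
    _ = 1 := by field_simp
  have hbij : ∑ z ∈ univ.filter (fun z : Fˣ => z^m' = 1), f ((w:F) * (z:F))
      = ∑ x ∈ Kf.erase 0, f ((w:F) * x) := by
    refine Finset.sum_bij' (fun z _ => (z:F))
      (fun x hx => Units.mk0 x (hxmem x hx).1) ?_ ?_ ?_ ?_ ?_
    · intro z hz
      rw [Finset.mem_filter] at hz
      rw [Finset.mem_erase]
      exact ⟨Units.ne_zero z, (hKmem _).2 (hzmem z hz.2)⟩
    · intro x hx
      rw [Finset.mem_filter]
      exact ⟨mem_univ _, (hxmem x hx).2⟩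
    · intro z hz
      exact Units.ext rfl
    · intro x hx
      rfl
    · intro z hz
      rfl
  -- main claim : sum over Kf is 0
  obtain ⟨x₁, hx₁⟩ := exists_trace_one k hk1 hF
  have hx₀ : ∃ x₀ ∈ Kf, Algebra.trace (ZMod 2) F ((w:F) * x₀) = 1 := by
    by_contra hno
    push_neg at hno
    have hno' : ∀ x ∈ Kf, Algebra.trace (ZMod 2) F ((w:F) * x) = 0 := by
      intro x hx
      rcases zmod2_cases (Algebra.trace (ZMod 2) F ((w:F) * x)) with h | h
      · exact h
      · exact absurd h (hno x hx)
    have hKcard : #Kf = 2^k := by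
      have h1 : #(Kf.erase 0) = m' := by
        have : #(Kf.erase 0) = #(univ.filter (fun z : Fˣ => z^m' = 1)) := by
          refine Finset.card_bij' (fun x hx => Units.mk0 x (hxmem x hx).1)
            (fun z _ => (z:F)) ?_ ?_ ?_ ?_
          · intro x hx
            rw [Finset.mem_filter]
            exact ⟨mem_univ _, (hxmem x hx).2⟩
          · intro z hz
            rw [Finset.mem_filter] at hz
            rw [Finset.mem_erase]
            exact ⟨Units.ne_zero z, (hKmem _).2 (hzmem z hz.2)⟩
          · intro x hx; rfl
          · intro z hz; exact Units.ext rfl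
        rw [this]
        apply Rcard_eq
        rw [Fintype.card_units, hF]
        have hmm : 2^(2*k) = 2^k * 2^k := by rw [two_mul, pow_add]
        rw [hmm]
        have h1le : 1 ≤ 2^k * 2^k := Nat.one_le_iff_ne_zero.2 (by positivity)
        have hfact : m' * (2^k + 1) = 2^k*2^k - 1 := by
          rw [hm']
          zify [h2k1, h1le]
          ring
        exact ⟨2^k + 1, hfact.symm⟩
      have := Finset.card_erase_add_one hK0
      omega
    -- injectivity of (x1,x2) ↦ x1 + w*x2
    have hKfix : ∀ x ∈ Kf, x^(2^k) = x := fun x hx => (hKmem x).1 hx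
    have hinj2 : Set.InjOn (fun p : F × F => p.1 + (w:F) * p.2) ↑(Kf ×ˢ Kf) := by
      intro p hp q hq heq
      rw [Finset.mem_coe, Finset.mem_product] at hp hq
      by_cases h22 : p.2 = q.2
      · have h11 : p.1 = q.1 := by
          have := heq
          simp only [h22] at this
          exact add_right_cancel this
        exact Prod.ext h11 h22
      · exfalso
        have hne : p.2 - q.2 ≠ 0 := sub_ne_zero.2 h22
        have hw_eq : (w:F) = (q.1 - p.1) * (p.2 - q.2)⁻¹ := by
          field_simp
          simp only at heq
          linear_combination heq
        apply hwK
        rw [hw_eq, mul_pow, inv_pow, sub_pow_char_pow, sub_pow_char_pow]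
        rw [hKfix _ hp.1, hKfix _ hq.1, hKfix _ hp.2, hKfix _ hq.2]
    have himg : (Kf ×ˢ Kf).image (fun p : F × F => p.1 + (w:F) * p.2) = univ := by
      apply Finset.eq_of_subset_of_card_le (subset_univ _)
      rw [card_univ, hF, Finset.card_image_of_injOn hinj2, Finset.card_product, hKcard]
      rw [two_mul, pow_add]
    have hx₁img : x₁ ∈ (Kf ×ˢ Kf).image (fun p : F × F => p.1 + (w:F) * p.2) := by
      rw [himg]; exact mem_univ _
    obtain ⟨p, hp, hpx⟩ := Finset.mem_image.1 hx₁img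
    rw [Finset.mem_product] at hp
    have : Algebra.trace (ZMod 2) F x₁ = 0 := by
      rw [← hpx, map_add, trace_zero_of_fixed k hk1 hF p.1 (hKfix _ hp.1), hno' p.2 hp.2]
      simp
    rw [hx₁] at this
    exact absurd this (by decide)
  obtain ⟨x₀, hx₀K, hx₀tr⟩ := hx₀
  have hKsum : ∑ x ∈ Kf, f ((w:F) * x) = 0 := by
    have h := sign_sum_zero (F := F) (fun a => CharTwo.add_self_eq_zero a) Kf
      (fun x => Algebra.trace (ZMod 2) F ((w:F) * x))
      (fun a b => by
        show Algebra.trace (ZMod 2) F ((w:F) * (a + b)) = _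
        rw [mul_add, map_add]) x₀ hx₀tr (fun a ha => hKadd a x₀ ha hx₀K)
    exact h
  have herase : f ((w:F) * 0) + ∑ x ∈ Kf.erase 0, f ((w:F) * x) = ∑ x ∈ Kf, f ((w:F) * x) :=
    Finset.add_sum_erase Kf (fun x => f ((w:F) * x)) hK0
  have hzero : f ((w:F) * 0) = 1 := by simp [hf]
  rw [hbij]
  rw [hzero, hKsum] at herase
  linarith

end Main1

theorem first_moment_S (k l : ℕ) (hk : Odd k) (hl : Odd l) (hl0 : 0 < l) (hlk : l < k)
    (hco : Nat.Coprime k l)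
    (F : Type) [Field F] [Fintype F] [DecidableEq F] [Algebra (ZMod 2) F]
    (hF : Fintype.card F = 2 ^ (2 * k))
    (d : ℕ) (hd : d = (2 ^ (l * k) + 1) / (2 ^ l + 1)) :
    3 * ∑ a ∈ Finset.univ.erase (0 : F),
        ∑ x : F, (if Algebra.trace (ZMod 2) F (x ^ d + a * x) = 0 then (1 : ℤ) else -1)
      = (2 ^ k + 1) * 2 ^ (k + 1) := by
  haveI : CharP F 2 := charF2
  have hk1 : 1 ≤ k := by omega
  have h2k1 : (1:ℕ) ≤ 2^k := Nat.one_le_two_pow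
  set f : F → ℤ := fun u => if Algebra.trace (ZMod 2) F u = 0 then (1:ℤ) else -1 with hf
  have hA : (2^l + 1) ∣ 2^(l*k) + 1 := by
    have := hk.nat_add_dvd_pow_add_pow (2^l) 1
    rwa [← pow_mul, one_pow] at this
  have hde : d * (2^l+1) = 2^(l*k)+1 := by rw [hd]; exact Nat.div_mul_cancel hA
  have hd0 : 0 < d := by
    rcases Nat.eq_zero_or_pos d with h | h
    · rw [h] at hde; simp at hde
    · exact h
  obtain ⟨x₁, hx₁⟩ := exists_trace_one k hk1 hF
  have hU1 : ∑ b : F, f b = 0 := by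
    have h := sign_sum_zero (F := F) (fun a => CharTwo.add_self_eq_zero a) univ
      (fun u => Algebra.trace (ZMod 2) F u)
      (fun a b => by show Algebra.trace (ZMod 2) F (a+b) = _; rw [map_add])
      x₁ hx₁ (fun a _ => mem_univ _)
    exact h
  -- full sum over a
  have hfull : ∑ a : F, (∑ x : F, f (x^d + a*x)) = 2^(2*k) := by
    rw [Finset.sum_comm]
    have hpt : ∀ x : F, (∑ a : F, f (x^d + a*x)) = if x = 0 then ((2:ℤ)^(2*k)) else 0 := by
      intro x
      by_cases hx : x = 0
      · rw [if_pos hx, hx]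
        have hz : ∀ a : F, (0:F)^d + a*0 = 0 := fun a => by
          rw [zero_pow hd0.ne', mul_zero, add_zero]
        rw [Finset.sum_congr rfl (fun a _ => by rw [hz a])]
        have hf0 : f 0 = 1 := by simp [hf]
        rw [Finset.sum_const, card_univ, hF, hf0]
        simp
      · rw [if_neg hx]
        have hbij : Function.Bijective (fun a : F => x^d + a*x) := by
          constructor
          · intro a b hab
            simp only at hab
            exact mul_right_cancel₀ hx (add_left_cancel hab)
          · intro b
            refine ⟨(b - x^d)/x, ?_⟩
            field_simp
            ring
        calc ∑ a : F, f (x^d + a*x) = ∑ b : F, f b := Function.Bijective.sum_comp hbij f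
        _ = 0 := hU1
    rw [Finset.sum_congr rfl (fun x _ => hpt x),
      Finset.sum_ite_eq' univ (0:F) (fun _ => ((2:ℤ)^(2*k))), if_pos (mem_univ 0)]
  have herase : (∑ x : F, f (x^d + (0:F)*x)) + (∑ a ∈ univ.erase (0:F), ∑ x : F, f (x^d + a*x))
      = ∑ a : F, (∑ x : F, f (x^d + a*x)) :=
    Finset.add_sum_erase univ (fun a : F => ∑ x : F, f (x^d + a*x)) (mem_univ 0)
  have hS0term : (∑ x : F, f (x^d + (0:F)*x)) = ∑ x : F, f (x^d) := by
    refine Finset.sum_congr rfl fun x _ => ?_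
    rw [zero_mul, add_zero]
  have hS0split : (∑ x : F, f (x^d)) = 1 + ∑ u : Fˣ, f ((u:F)^d) := by
    have h1 : f ((0:F)^d) + (∑ x ∈ univ.erase (0:F), f (x^d)) = ∑ x : F, f (x^d) :=
      Finset.add_sum_erase univ (fun x : F => f (x^d)) (mem_univ 0)
    have h2 : f ((0:F)^d) = 1 := by rw [zero_pow hd0.ne']; simp [hf]
    have h3 : (∑ x ∈ univ.erase (0:F), f (x^d)) = ∑ u : Fˣ, f ((u:F)^d) := by
      refine Finset.sum_bij' (fun x hx => Units.mk0 x (Finset.mem_erase.1 hx).1)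
        (fun u _ => (u:F)) ?_ ?_ ?_ ?_ ?_
      · intro x hx; exact mem_univ _
      · intro u _; exact Finset.mem_erase.2 ⟨Units.ne_zero u, mem_univ _⟩
      · intro x hx; rfl
      · intro u _; exact Units.ext rfl
      · intro x hx; rfl
    rw [← h1, h2, h3]
  set n := Fintype.card Fˣ with hn
  have hcardu : n = 2^(2*k) - 1 := by rw [hn, Fintype.card_units, hF]
  have h3G : 3 * Nat.gcd d n = 2^k + 1 := by
    rw [hcardu]; exact nt_main k l d hk hl hl0 hlk hco hd
  set G := Nat.gcd d n with hG
  have hG0 : 0 < G := Nat.gcd_pos_of_pos_left _ hd0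
  set m' := 2^k - 1 with hm'
  have hm'1 : m' + 1 = 2^k := by omega
  have hm3 : m' % 3 = 1 := by
    have h2 : 2^k % 3 = 2 := by
      obtain ⟨t, ht⟩ := hk
      have : (2:ℕ)^(2*t) % 3 = 1 := by
        rw [pow_mul, Nat.pow_mod]
        norm_num
      rw [ht, pow_add, Nat.mul_mod, this, pow_one]
    omega
  have hnfactm : n = (3*m') * G := by
    have hmm : (2:ℕ)^(2*k) = 2^k * 2^k := by rw [two_mul, pow_add]
    have h1le : 1 ≤ 2^k * 2^k := Nat.one_le_iff_ne_zero.2 (by positivity)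
    have h2 : n = m' * (2^k + 1) := by
      rw [hcardu, hmm, hm']
      zify [h2k1, h1le]
      ring
    rw [h2, ← h3G]
    ring
  have hsdiv : 3*m' = n / G := by rw [hnfactm, Nat.mul_div_cancel _ hG0]
  have hpows := pow_sum_eq d hd0 (fun u : Fˣ => f (u:F)) G (3*m') hG hsdiv
  have hconn : ∑ u : Fˣ, f ((u:F)^d) = ∑ u : Fˣ, (fun v : Fˣ => f (v:F)) (u^d) := by
    refine Finset.sum_congr rfl fun u _ => ?_
    show f ((u:F)^d) = f ((u^d : Fˣ) : F)
    rw [Units.val_pow_eq_pow_val]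
  -- evaluate sum over Rs
  have h3n : 3 ∣ n := ⟨m' * G, by rw [hnfactm]; ring⟩
  have hmn : m' ∣ n := ⟨3 * G, by rw [hnfactm]; ring⟩
  have hRm : #(univ.filter fun y : Fˣ => y^m' = 1) = m' := Rcard_eq m' hmn
  have hR3 : #(univ.filter fun y : Fˣ => y^3 = 1) = 3 := Rcard_eq 3 h3n
  have hRs : #(univ.filter fun y : Fˣ => y^(3*m') = 1) = 3*m' := Rcard_eq _ ⟨G, hnfactm⟩
  have hcop3 : Nat.gcd 3 m' = 1 := by
    have := Nat.Prime.coprime_iff_not_dvd Nat.prime_three (n := m')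
    rw [Nat.Coprime] at this
    rw [this]
    omega
  have hinjp : Set.InjOn (fun p : Fˣ × Fˣ => p.1 * p.2)
      ↑((univ.filter fun y : Fˣ => y^3 = 1) ×ˢ (univ.filter fun y : Fˣ => y^m' = 1)) := by
    intro p hp q hq heq
    rw [Finset.mem_coe, Finset.mem_product, Finset.mem_filter, Finset.mem_filter] at hp hq
    simp only at heq
    have hdiv : q.1 / p.1 = p.2 / q.2 := by
      rw [div_eq_div_iff_mul_eq_mul, ← heq, mul_comm]
    have hc3 : (q.1/p.1)^3 = 1 := by
      rw [div_pow, hq.1.2, hp.1.2, div_one]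
    have hcm : (q.1/p.1)^m' = 1 := by
      rw [hdiv, div_pow, hp.2.2, hq.2.2, div_one]
    have h1 : q.1/p.1 = 1 := by
      have hgg := pow_gcd_eq_one.2 ⟨hc3, hcm⟩
      rwa [hcop3, pow_one] at hgg
    have h2 : p.2/q.2 = 1 := by rw [← hdiv, h1]
    exact Prod.ext (div_eq_one.1 h1).symm (div_eq_one.1 h2)
  have himgp : ((univ.filter fun y : Fˣ => y^3 = 1) ×ˢ (univ.filter fun y : Fˣ => y^m' = 1)).image
        (fun p : Fˣ × Fˣ => p.1 * p.2)
      = (univ.filter fun y : Fˣ => y^(3*m') = 1) := by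
    apply Finset.eq_of_subset_of_card_le
    · intro b hb
      obtain ⟨p, hp, hpb⟩ := Finset.mem_image.1 hb
      rw [Finset.mem_product, Finset.mem_filter, Finset.mem_filter] at hp
      rw [Finset.mem_filter]
      refine ⟨mem_univ _, ?_⟩
      rw [← hpb]
      show (p.1 * p.2)^(3*m') = 1
      rw [mul_pow, pow_mul, hp.1.2, one_pow, one_mul, mul_comm 3 m', pow_mul, hp.2.2, one_pow]
    · rw [hRs, Finset.card_image_of_injOn hinjp, Finset.card_product, hR3, hRm]
  have hzfix : ∀ z : Fˣ, z^m' = 1 → ((z:F))^(2^k) = (z:F) := by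
    intro z hz
    rw [← hm'1, pow_succ, ← Units.val_pow_eq_pow_val, hz, Units.val_one, one_mul]
  have hTsum : ∑ b ∈ (univ.filter fun y : Fˣ => y^(3*m') = 1), f (b:F) = (2^k : ℤ) - 3 := by
    rw [← himgp, Finset.sum_image
      (fun p hp q hq h => hinjp (Finset.mem_coe.2 hp) (Finset.mem_coe.2 hq) h),
      Finset.sum_product]
    have hone : (1:Fˣ) ∈ (univ.filter fun y : Fˣ => y^3 = 1) :=
      Finset.mem_filter.2 ⟨mem_univ _, one_pow 3⟩
    have hterm1 : ∑ z ∈ (univ.filter fun y : Fˣ => y^m' = 1), f (((1:Fˣ)*z : Fˣ) : F)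
        = (m' : ℤ) := by
      have hc : ∀ z ∈ (univ.filter fun y : Fˣ => y^m' = 1), f (((1:Fˣ)*z : Fˣ) : F) = 1 := by
        intro z hz
        rw [one_mul]
        have hz' : z^m' = 1 := (Finset.mem_filter.1 hz).2
        have := trace_zero_of_fixed k hk1 hF (z:F) (hzfix z hz')
        simp [hf, this]
      rw [Finset.sum_congr rfl hc, Finset.sum_const, hRm]
      simp
    have hterm2 : ∀ w ∈ (univ.filter fun y : Fˣ => y^3 = 1).erase 1,
        ∑ z ∈ (univ.filter fun y : Fˣ => y^m' = 1), f ((w*z : Fˣ) : F) = -1 := by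
      intro w hw
      have hw1 : w ≠ 1 := (Finset.mem_erase.1 hw).1
      have hw3 : w^3 = 1 := (Finset.mem_filter.1 (Finset.mem_erase.1 hw).2).2
      have hcs := coset_sum k hk1 hF (hm' ▸ hm3) w hw3 hw1
      rw [← hcs]
      refine Finset.sum_congr (by rw [hm']) fun z hz => ?_
      show f ((w*z : Fˣ) : F) = _
      rw [hf, Units.val_mul]
    have hm'cast : ((m' : ℕ) : ℤ) = (2:ℤ)^k - 1 := by
      rw [hm']
      push_cast [h2k1]
      ring
    have hgen : ∀ w ∈ (univ.filter fun y : Fˣ => y^3 = 1),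
        (∑ z ∈ (univ.filter fun y : Fˣ => y^m' = 1), f ((w*z : Fˣ) : F))
        = (if w = (1:Fˣ) then (m':ℤ)+1 else 0) - 1 := by
      intro w hw
      by_cases h1 : w = 1
      · subst h1
        rw [if_pos rfl, hterm1]
        ring
      · rw [if_neg h1, hterm2 w (Finset.mem_erase.2 ⟨h1, hw⟩)]
        ring
    rw [Finset.sum_congr rfl hgen, Finset.sum_sub_distrib,
      Finset.sum_ite_eq' _ (1:Fˣ) (fun _ => (m':ℤ)+1), if_pos hone, Finset.sum_const, hR3,
      hm'cast, nsmul_eq_mul]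
    push_cast
    ring
  have hsum_units : ∑ u : Fˣ, f ((u:F)^d) = (G:ℤ) * ((2^k:ℤ) - 3) := by
    rw [hconn, hpows, hTsum]
  have h3Gz : (3:ℤ) * (G:ℤ) = 2^k + 1 := by exact_mod_cast h3G
  show 3 * (∑ a ∈ univ.erase (0:F), ∑ x : F, f (x^d + a*x)) = (2^k+1) * 2^(k+1)
  have hErase : ∑ a ∈ univ.erase (0:F), ∑ x : F, f (x^d + a*x)
      = 2^(2*k) - (1 + (G:ℤ) * ((2^k:ℤ) - 3)) := by
    rw [hS0term, hS0split, hsum_units, hfull] at herase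
    linarith
  rw [hErase, show (2:ℤ)^(2*k) = 2^k * 2^k by rw [two_mul, pow_add],
    show (2:ℤ)^(k+1) = 2^k * 2 from pow_succ 2 k]
  linear_combination (3 - (2:ℤ)^k) * h3Gz
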